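/- Along the vertical Hamiltonian flow ḣ1 = -h2h3, ḣ2 = h1h3, ḣ3 = h1h4 + h2h5, ḣ4 = h1h6 + h2h7, ḣ5 = h1h7 + h2h8, ḣ6 = ḣ7 = ḣ8 = 0, the functions H = (h1²+h2²)/2 and C = h5²h6 - 2h4h5h7 + h4²h8 - 2h3(h6h8-h7²) are constants of motion: for any solution h(t) of the ODE, (d/dt)H(h(t)) = 0 and (d/dt)C(h(t)) = 0. -/

import Mathlib

/- H = (h1²+h2²)/2 and the Casimir C are constants of motion of the vertical
subsystem of the normal Hamiltonian system on the (2,3,5,8) Carnot group. -/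

noncomputable section

/-- H = (h1² + h2²)/2 (0-based indexing: h i = h_{i+1}). -/
noncomputable def Ham (h : Fin 8 → ℝ) : ℝ := ((h 0)^2 + (h 1)^2) / 2

/-- C = h5²h6 − 2h4h5h7 + h4²h8 − 2h3(h6h8 − h7²). -/
noncomputable def Cas (h : Fin 8 → ℝ) : ℝ :=
  (h 4)^2 * h 5 - 2 * h 3 * h 4 * h 6 + (h 3)^2 * h 7
    - 2 * h 2 * (h 5 * h 7 - (h 6)^2)

theorem conservation (h : ℝ → Fin 8 → ℝ)
    (h1' : ∀ t, HasDerivAt (fun s => h s 0) (-(h t 1 * h t 2)) t)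
    (h2' : ∀ t, HasDerivAt (fun s => h s 1) (h t 0 * h t 2) t)
    (h3' : ∀ t, HasDerivAt (fun s => h s 2) (h t 0 * h t 3 + h t 1 * h t 4) t)
    (h4' : ∀ t, HasDerivAt (fun s => h s 3) (h t 0 * h t 5 + h t 1 * h t 6) t)
    (h5' : ∀ t, HasDerivAt (fun s => h s 4) (h t 0 * h t 6 + h t 1 * h t 7) t)
    (h6' : ∀ t, HasDerivAt (fun s => h s 5) 0 t)
    (h7' : ∀ t, HasDerivAt (fun s => h s 6) 0 t)
    (h8' : ∀ t, HasDerivAt (fun s => h s 7) 0 t) :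
    (∀ t, HasDerivAt (fun s => Ham (h s)) 0 t) ∧
    (∀ t, HasDerivAt (fun s => Cas (h s)) 0 t) := by
  constructor
  · intro t
    have H := (((h1' t).fun_pow 2).add ((h2' t).fun_pow 2)).div_const 2
    simp only [Ham]
    refine H.congr_deriv ?_
    norm_num
    ring
  · intro t
    have H := (((((h5' t).fun_pow 2).mul (h6' t)).sub
        ((((h4' t).const_mul 2).mul (h5' t)).mul (h7' t))).add
        (((h4' t).fun_pow 2).mul (h8' t))).sub
        (((h3' t).const_mul 2).mul (((h6' t).mul (h8' t)).sub ((h7' t).fun_pow 2)))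
    simp only [Cas]
    refine H.congr_deriv ?_
    norm_num
    ring
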